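/- The action of SL(2, ℤ) on the torus 𝕋² = ℝ²/ℤ² induced by matrix multiplication on ℝ² is weak mixing but not strong mixing: for all nonempty open sets U₁, U₂, V₁, V₂ ⊆ 𝕋² there exists γ ∈ SL(2, ℤ) with γU₁ ∩ V₁ ≠ ∅ and γU₂ ∩ V₂ ≠ ∅; but there exist nonempty open sets U, V ⊆ 𝕋² such that for every finite set F ⊆ SL(2, ℤ) there is γ ∈ SL(2, ℤ) \ F with γU ∩ V = ∅. -/

import Mathlib

open Pointwise

/-- A subset `N` of a group `G` is thick if for every finite subset `F ⊆ G`,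
`N ∩ ⋂_{γ ∈ F} γN ≠ ∅`. -/
def IsThick {G : Type*} [Group G] (N : Set G) : Prop :=
  ∀ F : Finset G, (N ∩ ⋂ γ ∈ F, γ • N).Nonempty

/-- The torus `𝕋² = ℝ²/ℤ²`, realized as the quotient of `Fin 2 → ℝ` by the integer
lattice (the subgroup of vectors with all coordinates in `ℤ·1`), with the quotient
topology. -/
abbrev Torus2 : Type :=
  (Fin 2 → ℝ) ⧸ (AddSubgroup.pi (Set.univ : Set (Fin 2)) fun _ => AddSubgroup.zmultiples (1 : ℝ))

/-- The quotient map `ℝ² → 𝕋²`. -/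
def torusMk : (Fin 2 → ℝ) → Torus2 := QuotientAddGroup.mk

/-- The linear action of `γ ∈ SL(2, ℤ)` on `ℝ²` by matrix multiplication. -/
def sl2Vec (γ : Matrix.SpecialLinearGroup (Fin 2) ℤ) (v : Fin 2 → ℝ) : Fin 2 → ℝ :=
  ((γ : Matrix (Fin 2) (Fin 2) ℤ).map (Int.cast : ℤ → ℝ)).mulVec v

/-- `slHits γ U V` says that `γU ∩ V ≠ ∅` for the induced action of `γ ∈ SL(2, ℤ)` on the
torus: since the quotient map is surjective, this holds iff some `v ∈ ℝ²` has `[v] ∈ U`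
and `[γv] ∈ V`. -/
def slHits (γ : Matrix.SpecialLinearGroup (Fin 2) ℤ) (U V : Set Torus2) : Prop :=
  ∃ v : Fin 2 → ℝ, torusMk v ∈ U ∧ torusMk (sl2Vec γ v) ∈ V



noncomputable section SL2Aux

noncomputable def phi : ℝ := (1 + Real.sqrt 5) / 2

lemma sqrt5_irr : Irrational (Real.sqrt 5) := by
  have : Irrational (Real.sqrt (5:ℕ)) := (Nat.prime_five).irrational_sqrt
  simpa using this

lemma phi_irr : Irrational phi := by
  have h1 : Irrational ((1:ℚ) + Real.sqrt 5) := sqrt5_irr.ratCast_add 1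
  have h2 := h1.div_ratCast (q := 2) (by norm_num)
  simpa [phi, div_eq_mul_inv] using h2

lemma sqrt5_sq : Real.sqrt 5 ^ 2 = 5 := Real.sq_sqrt (by norm_num)

lemma phi_gt_one : 1 < phi := by
  have h : 2 < Real.sqrt 5 := by
    nlinarith [Real.sq_sqrt (show (0:ℝ) ≤ 5 by norm_num), Real.sqrt_nonneg 5]
  unfold phi; linarith

lemma phi_sq : phi ^ 2 = phi + 1 := by
  have := sqrt5_sq
  unfold phi; ring_nf; nlinarith [sqrt5_sq]




/-- Stepping lemma, positive step. -/
lemma step_pos {β δ : ℝ} (hβ : 0 < β) (hβδ : β ≤ δ) {M : ℕ} (hM : 1 ≤ M * β) (c θ : ℝ) :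
    ∃ m : ℕ, m ≤ M ∧ ∃ j : ℤ, |c + m * β - θ - j| ≤ δ := by
  set j : ℤ := ⌈c - θ⌉ with hj
  have hx0 : 0 ≤ θ + j - c := by have := Int.le_ceil (c - θ); linarith
  have hx1 : θ + j - c < 1 := by have := Int.ceil_lt_add_one (c - θ); linarith
  set x : ℝ := θ + j - c with hxdef
  have hfl : (0:ℤ) ≤ ⌊x / β⌋ := Int.floor_nonneg.mpr (div_nonneg hx0 hβ.le)
  have hcast : ((⌊x / β⌋.toNat : ℕ) : ℝ) = (⌊x / β⌋ : ℝ) := by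
    exact_mod_cast Int.toNat_of_nonneg hfl
  have hle : (⌊x / β⌋ : ℝ) * β ≤ x := by
    have := Int.floor_le (x / β)
    calc (⌊x / β⌋ : ℝ) * β ≤ (x / β) * β := by nlinarith
    _ = x := by field_simp
  have hlt : x < ((⌊x / β⌋ : ℝ) + 1) * β := by
    have := Int.lt_floor_add_one (x / β)
    calc x = (x / β) * β := by field_simp
    _ < ((⌊x / β⌋ : ℝ) + 1) * β := by nlinarith
  refine ⟨⌊x / β⌋.toNat, ?_, j, ?_⟩
  · have hdiv : x / β < (M : ℝ) := by
      have h1 : x / β < 1 / β := by gcongr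
      have h2 : 1 / β ≤ (M : ℝ) := by rw [div_le_iff₀ hβ]; linarith
      linarith
    have h3 : (⌊x / β⌋ : ℝ) < (M : ℝ) := lt_of_le_of_lt (Int.floor_le _) hdiv
    have h4 : ⌊x / β⌋ ≤ (M : ℤ) := by exact_mod_cast h3.le
    exact_mod_cast Int.toNat_le.mpr h4
  · have key : c + ((⌊x / β⌋.toNat : ℕ) : ℝ) * β - θ - j = (⌊x / β⌋ : ℝ) * β - x := by
      rw [hcast, hxdef]; ring
    rw [key, abs_le]
    constructor <;> linarith

/-- Stepping lemma, arbitrary nonzero step. -/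
lemma step_any {β δ : ℝ} (hβ : β ≠ 0) (hβδ : |β| ≤ δ) {M : ℕ} (hM : 1 ≤ M * |β|) (c θ : ℝ) :
    ∃ m : ℕ, m ≤ M ∧ ∃ j : ℤ, |c + m * β - θ - j| ≤ δ := by
  rcases hβ.lt_or_gt with h | h
  · have habs : |β| = -β := abs_of_neg h
    rw [habs] at hβδ hM
    obtain ⟨m, hm, j, hj⟩ := step_pos (by linarith : 0 < -β) hβδ hM (-c) (-θ)
    refine ⟨m, hm, -j, ?_⟩
    rw [← abs_neg]
    convert hj using 2
    push_cast
    ring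
  · have habs : |β| = β := abs_of_pos h
    rw [habs] at hβδ hM
    exact step_pos h hβδ hM c θ

/-- For every `δ > 0` there is `K` such that for all `c θ`, some `|h| ≤ K` has
`c + h·φ` within `δ` of `θ` mod 1. -/
lemma key1D {δ : ℝ} (hδ : 0 < δ) :
    ∃ K : ℕ, ∀ c θ : ℝ, ∃ h j : ℤ, |h| ≤ K ∧ |c + h * phi - θ - j| ≤ δ := by
  obtain ⟨j₀, k, hk0, hkn, hap⟩ := Real.exists_int_int_abs_mul_sub_le phi
    (n := ⌈1/δ⌉₊ + 1) (Nat.succ_pos _)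
  set β : ℝ := k * phi - j₀ with hβdef
  have hβ0 : β ≠ 0 := by
    intro h0
    apply phi_irr
    refine ⟨(j₀ : ℚ) / (k : ℚ), ?_⟩
    have hk : (k : ℝ) ≠ 0 := by exact_mod_cast hk0.ne'
    push_cast
    rw [div_eq_iff hk]
    linarith [h0]
  have hβδ : |β| ≤ δ := by
    refine hap.trans ?_
    rw [div_le_iff₀ (by positivity)]
    have h1 : (1:ℝ)/δ ≤ ⌈1/δ⌉₊ := Nat.le_ceil _
    have h2 : (0:ℝ) < (⌈1/δ⌉₊ : ℝ) + 1 + 1 := by positivity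
    rw [div_le_iff₀ hδ] at h1
    push_cast
    nlinarith
  set M : ℕ := ⌈1/|β|⌉₊ with hMdef
  have hM : 1 ≤ M * |β| := by
    have h1 : (1:ℝ)/|β| ≤ M := Nat.le_ceil _
    have h2 : 0 < |β| := abs_pos.mpr hβ0
    rw [div_le_iff₀ h2] at h1
    linarith
  refine ⟨M * k.toNat, fun c θ => ?_⟩
  obtain ⟨m, hm, j, hj⟩ := step_any hβ0 hβδ hM c θ
  refine ⟨m * k, j + m * j₀, ?_, ?_⟩
  · have hk' : k.toNat = k := Int.toNat_of_nonneg hk0.le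
    rw [abs_of_nonneg (by positivity : (0:ℤ) ≤ m * k)]
    calc (m : ℤ) * k ≤ M * k := by
          have : (m:ℤ) ≤ M := by exact_mod_cast hm
          exact mul_le_mul_of_nonneg_right this hk0.le
    _ = (M * k.toNat : ℕ) := by push_cast [hk']; ring
  · convert hj using 2
    push_cast
    rw [hβdef]
    ring




def torusLattice : AddSubgroup (Fin 2 → ℝ) :=
  AddSubgroup.pi (Set.univ : Set (Fin 2)) fun _ => AddSubgroup.zmultiples (1 : ℝ)

lemma continuous_torusMk : Continuous torusMk := continuous_quot_mk

lemma intVec_mem (a b : ℤ) : (![(a:ℝ), (b:ℝ)] : Fin 2 → ℝ) ∈ torusLattice := by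
  intro i _
  fin_cases i
  · exact ⟨a, by simp⟩
  · exact ⟨b, by simp⟩

lemma torusMk_eq_of_sub_mem {v w : Fin 2 → ℝ} (h : -v + w ∈ torusLattice) :
    torusMk v = torusMk w := by
  exact (QuotientAddGroup.eq (s := torusLattice)).mpr h

def Amat : Matrix.SpecialLinearGroup (Fin 2) ℤ :=
  ⟨!![2, 1; 1, 1], by simp [Matrix.det_fin_two_of]⟩

noncomputable def AR : Matrix (Fin 2) (Fin 2) ℝ := !![2, 1; 1, 1]

noncomputable def eplus : Fin 2 → ℝ := ![phi, 1]

lemma AR_mulVec_eplus : AR.mulVec eplus = (phi + 1) • eplus := by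
  funext i
  fin_cases i <;>
    simp [AR, eplus, Matrix.mulVec, dotProduct, Fin.sum_univ_two] <;>
    nlinarith [phi_sq]

lemma AR_pow_mulVec_eplus (n : ℕ) : (AR ^ n).mulVec eplus = ((phi + 1) ^ n) • eplus := by
  induction n with
  | zero => simp [Matrix.mulVec_one]
  | succ n ih =>
    rw [pow_succ, ← Matrix.mulVec_mulVec, AR_mulVec_eplus, Matrix.mulVec_smul, ih]
    rw [smul_smul, pow_succ]
    ring_nf

lemma cast_Amat : ((Amat : Matrix (Fin 2) (Fin 2) ℤ)).map (Int.cast : ℤ → ℝ) = AR := by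
  ext i j
  fin_cases i <;> fin_cases j <;> simp [Amat, AR]

lemma sl2Vec_Amat_pow (n : ℕ) (v : Fin 2 → ℝ) :
    sl2Vec (Amat ^ n) v = (AR ^ n).mulVec v := by
  unfold sl2Vec
  rw [Matrix.SpecialLinearGroup.coe_pow]
  have h2 : ((Amat : Matrix (Fin 2) (Fin 2) ℤ) ^ n).map (Int.cast : ℤ → ℝ)
      = ((Amat : Matrix (Fin 2) (Fin 2) ℤ).map (Int.cast : ℤ → ℝ)) ^ n := by
    simpa [RingHom.mapMatrix_apply] using
      map_pow ((Int.castRingHom ℝ).mapMatrix) (Amat : Matrix (Fin 2) (Fin 2) ℤ) n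
  rw [h2, cast_Amat]

lemma phi_pos : 0 < phi := lt_trans one_pos phi_gt_one

lemma key_pair (U V : Set Torus2) (hUo : IsOpen U) (hUne : U.Nonempty)
    (hVo : IsOpen V) (hVne : V.Nonempty) :
    ∃ N : ℕ, ∀ n, N ≤ n → slHits (Amat ^ n) U V := by
  obtain ⟨xu, hxu⟩ := hUne
  obtain ⟨u, rfl⟩ := QuotientAddGroup.mk_surjective xu
  obtain ⟨xv, hxv⟩ := hVne
  obtain ⟨w, rfl⟩ := QuotientAddGroup.mk_surjective xv
  have hu : u ∈ torusMk ⁻¹' U := hxu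
  have hw : w ∈ torusMk ⁻¹' V := hxv
  obtain ⟨εU, hεU, hballU⟩ := Metric.isOpen_iff.mp (hUo.preimage continuous_torusMk) u hu
  obtain ⟨εV, hεV, hballV⟩ := Metric.isOpen_iff.mp (hVo.preimage continuous_torusMk) w hw
  obtain ⟨K, hK⟩ := key1D (show (0:ℝ) < εV / 2 by linarith)
  obtain ⟨N, hN⟩ := pow_unbounded_of_one_lt (((K:ℝ) + 1) * (2 * phi) / εU)
    (show (1:ℝ) < phi + 1 by linarith [phi_pos])
  refine ⟨N, fun n hn => ?_⟩
  have hlampow : ((K:ℝ) + 1) * (2 * phi) / εU < (phi + 1) ^ n :=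
    hN.trans_le (pow_le_pow_right₀ (by linarith [phi_pos]) hn)
  have hlampos : (0:ℝ) < (phi + 1) ^ n := pow_pos (by linarith [phi_pos]) n
  set a : Fin 2 → ℝ := (AR ^ n).mulVec u with ha
  set h₀ : ℤ := round (a 1 - w 1) with hh₀
  have hr : |a 1 - w 1 - h₀| ≤ 1/2 := abs_sub_round _
  set c : ℝ := a 0 + (w 1 + h₀ - a 1) * phi with hc
  obtain ⟨h', j, hh', happ⟩ := hK c (w 0)
  set t : ℝ := w 1 + h₀ + h' - a 1 with ht
  have hh'R : |(h' : ℝ)| ≤ (K : ℝ) := by exact_mod_cast hh'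
  have htle : |t| ≤ (K : ℝ) + 1/2 := by
    have : t = (h' : ℝ) - (a 1 - w 1 - h₀) := by rw [ht]; ring
    rw [this]
    calc |(h' : ℝ) - (a 1 - w 1 - h₀)| ≤ |(h' : ℝ)| + |a 1 - w 1 - h₀| := abs_sub _ _
    _ ≤ (K : ℝ) + 1/2 := by linarith
  set s : ℝ := t / (phi + 1) ^ n with hs
  have h2phi : (0:ℝ) < 2 * phi := by linarith [phi_pos]
  have hKbound : (K : ℝ) + 1 < (phi + 1) ^ n * (εU / (2 * phi)) := by
    rw [div_lt_iff₀ hεU] at hlampow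
    have hre : (phi + 1) ^ n * (εU / (2 * phi)) = (phi + 1) ^ n * εU / (2 * phi) := by ring
    rw [hre, lt_div_iff₀ h2phi]
    linarith
  have hsabs : |s| < εU / (2 * phi) := by
    rw [hs, abs_div, abs_of_pos hlampos, div_lt_iff₀ hlampos]
    calc |t| ≤ (K:ℝ) + 1/2 := htle
    _ < (phi + 1) ^ n * (εU / (2 * phi)) := by linarith
    _ = εU / (2 * phi) * (phi + 1) ^ n := by ring
  have hsphi : |s| * phi < εU / 2 := by
    have h1 := mul_lt_mul_of_pos_right hsabs phi_pos
    have h2 : εU / (2 * phi) * phi = εU / 2 := by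
      field_simp
      ring_nf; exact mul_inv_cancel₀ phi_pos.ne'
    linarith
  set v : Fin 2 → ℝ := u + s • eplus with hv
  have hv0 : v 0 = u 0 + s * phi := by rw [hv]; simp [eplus]
  have hv1 : v 1 = u 1 + s * 1 := by rw [hv]; simp [eplus]
  have hvU : torusMk v ∈ U := by
    apply hballU
    rw [Metric.mem_ball, dist_pi_lt_iff hεU, Fin.forall_fin_two]
    constructor
    · rw [Real.dist_eq, hv0, show u 0 + s * phi - u 0 = s * phi by ring,
        abs_mul, abs_of_pos phi_pos]
      linarith
    · rw [Real.dist_eq, hv1, show u 1 + s * 1 - u 1 = s by ring]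
      nlinarith [abs_nonneg s, phi_gt_one]
  set p : Fin 2 → ℝ := a + t • eplus with hp
  have hveq : sl2Vec (Amat ^ n) v = p := by
    rw [sl2Vec_Amat_pow, hv, Matrix.mulVec_add, Matrix.mulVec_smul, AR_pow_mulVec_eplus,
      hp, ← ha, smul_smul, hs, div_mul_cancel₀ _ hlampos.ne']
  set q : Fin 2 → ℝ := p - ![(j : ℝ), ((h₀ + h' : ℤ) : ℝ)] with hq
  have hq0 : q 0 = a 0 + t * phi - (j : ℝ) := by rw [hq, hp]; simp [eplus, Matrix.vecHead, Matrix.vecTail]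
  have hq1 : q 1 = a 1 + t * 1 - ((h₀ + h' : ℤ) : ℝ) := by rw [hq, hp]; simp [eplus, Matrix.vecHead, Matrix.vecTail]
  have hqV : q ∈ torusMk ⁻¹' V := by
    apply hballV
    rw [Metric.mem_ball, dist_pi_lt_iff hεV, Fin.forall_fin_two]
    constructor
    · rw [Real.dist_eq, hq0]
      have heq : a 0 + t * phi - (j:ℝ) - w 0 = c + (h':ℝ) * phi - w 0 - j := by
        rw [hc, ht]; push_cast; ring
      rw [heq]
      linarith [happ]
    · rw [Real.dist_eq, hq1]
      have heq : a 1 + t * 1 - ((h₀ + h' : ℤ) : ℝ) - w 1 = 0 := by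
        rw [ht]; push_cast; ring
      rw [heq]
      simpa using hεV
  have hpq : torusMk p = torusMk q := by
    apply Eq.symm
    apply torusMk_eq_of_sub_mem
    have hsub : -q + p = ![(j : ℝ), ((h₀ + h' : ℤ) : ℝ)] := by
      rw [hq]; abel
    rw [hsub]
    exact intVec_mem j (h₀ + h')
  exact ⟨v, hvU, by rw [hveq, hpq]; exact hqV⟩


def Bmat (n : ℤ) : Matrix.SpecialLinearGroup (Fin 2) ℤ :=
  ⟨!![1, n; 0, 1], by simp [Matrix.det_fin_two_of]⟩

lemma sl2Vec_Bmat_one (n : ℤ) (v : Fin 2 → ℝ) : sl2Vec (Bmat n) v 1 = v 1 := by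
  simp [sl2Vec, Bmat, Matrix.mulVec, dotProduct, Fin.sum_univ_two]

lemma isOpenMap_torusMk : IsOpenMap torusMk := QuotientAddGroup.isOpenMap_coe

/-- The strip at heights in `I`. -/
def strip (I : Set ℝ) : Set Torus2 := torusMk '' {v | v 1 ∈ I}

lemma strip_isOpen (I : Set ℝ) (hI : IsOpen I) : IsOpen (strip I) :=
  isOpenMap_torusMk _ ((hI.preimage (continuous_apply 1)))

lemma strip_nonempty (I : Set ℝ) (hI : I.Nonempty) : (strip I).Nonempty := by
  obtain ⟨x, hx⟩ := hI
  exact ⟨torusMk ![0, x], ![0, x], by simpa using hx, rfl⟩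

lemma mem_strip {I : Set ℝ} {v : Fin 2 → ℝ} (h : torusMk v ∈ strip I) :
    ∃ z : ℤ, v 1 - z ∈ I := by
  obtain ⟨w, hw, hweq⟩ := h
  have hmem : -w + v ∈ torusLattice := (QuotientAddGroup.eq (s := torusLattice)).mp hweq
  obtain ⟨z, hz⟩ := hmem 1 (Set.mem_univ 1)
  refine ⟨z, ?_⟩
  have hzr : (z : ℝ) = -w 1 + v 1 := by simpa [zsmul_eq_mul] using hz
  have hrw : v 1 - z = w 1 := by linarith
  rw [hrw]
  simpa using hw

lemma not_strong : ∃ U V : Set Torus2, IsOpen U ∧ U.Nonempty ∧ IsOpen V ∧ V.Nonempty ∧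
    ∀ F : Finset (Matrix.SpecialLinearGroup (Fin 2) ℤ),
      ∃ γ : Matrix.SpecialLinearGroup (Fin 2) ℤ, γ ∉ F ∧ ¬ slHits γ U V := by
  refine ⟨strip (Set.Ioo 0 (1/8)), strip (Set.Ioo (1/4) (1/3)),
    strip_isOpen _ isOpen_Ioo, strip_nonempty _ ⟨1/16, by norm_num⟩,
    strip_isOpen _ isOpen_Ioo, strip_nonempty _ ⟨7/24, by norm_num⟩, fun F => ?_⟩
  obtain ⟨n, hn⟩ := Infinite.exists_notMem_finset
    (F.image (fun γ : Matrix.SpecialLinearGroup (Fin 2) ℤ => (γ : Matrix (Fin 2) (Fin 2) ℤ) 0 1))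
  refine ⟨Bmat n, fun hF => hn ?_, ?_⟩
  · exact Finset.mem_image.mpr ⟨Bmat n, hF, by simp [Bmat]⟩
  · rintro ⟨v, hvU, hvV⟩
    obtain ⟨z, hz⟩ := mem_strip hvU
    rw [show torusMk (sl2Vec (Bmat n) v) ∈ strip (Set.Ioo (1/4) (1/3)) ↔ _ from Iff.rfl] at hvV
    obtain ⟨z', hz'⟩ := mem_strip hvV
    rw [sl2Vec_Bmat_one] at hz'
    obtain ⟨hz1, hz2⟩ := hz
    obtain ⟨hz1', hz2'⟩ := hz'
    have h1 : (0 : ℝ) < ((z - z' : ℤ) : ℝ) := by push_cast; linarith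
    have h2 : ((z - z' : ℤ) : ℝ) < 1 := by push_cast; linarith
    have h1' : (0 : ℤ) < z - z' := by exact_mod_cast h1
    have h2' : (z - z' : ℤ) < 1 := by exact_mod_cast h2
    omega

end SL2Aux

/-- The action of `SL(2, ℤ)` on the torus `𝕋² = ℝ²/ℤ²` is weak mixing but not strong
mixing. -/
theorem sl2_torus_weakMixing_not_strongMixing :
    (∀ U₁ U₂ V₁ V₂ : Set Torus2,
      IsOpen U₁ → U₁.Nonempty → IsOpen U₂ → U₂.Nonempty →
      IsOpen V₁ → V₁.Nonempty → IsOpen V₂ → V₂.Nonempty →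
      ∃ γ : Matrix.SpecialLinearGroup (Fin 2) ℤ, slHits γ U₁ V₁ ∧ slHits γ U₂ V₂) ∧
    (∃ U V : Set Torus2, IsOpen U ∧ U.Nonempty ∧ IsOpen V ∧ V.Nonempty ∧
      ∀ F : Finset (Matrix.SpecialLinearGroup (Fin 2) ℤ),
        ∃ γ : Matrix.SpecialLinearGroup (Fin 2) ℤ, γ ∉ F ∧ ¬ slHits γ U V) := by
  constructor
  · intro U₁ U₂ V₁ V₂ hU₁o hU₁ne hU₂o hU₂ne hV₁o hV₁ne hV₂o hV₂ne
    obtain ⟨N₁, h₁⟩ := key_pair U₁ V₁ hU₁o hU₁ne hV₁o hV₁ne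
    obtain ⟨N₂, h₂⟩ := key_pair U₂ V₂ hU₂o hU₂ne hV₂o hV₂ne
    exact ⟨Amat ^ (max N₁ N₂), h₁ _ (le_max_left _ _), h₂ _ (le_max_right _ _)⟩
  · exact not_strong
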